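/- In the Ω(n)-gap instance with the general contract t(1)=0, t(2)=1, t(3)=ε (ε ∈ (0,1)), the principal's utility is at least (1−ε)·Σ_{i=1}^{n} (1 − 2^{i−n−1})·(i/2^{n+1}) ≥ (1−ε)·(1/2^{n+2})·Σ_{i=1}^{n} i = Ω(n²/2^n). Consequently, combined with the n/2^n upper bound for all linear contracts, the ratio between the optimal general-contract utility and the optimal linear-contract utility in this instance is Ω(n). -/

import Mathlib

lemma prod_one_sub_ge (s : Finset ℕ) (a : ℕ → ℝ)
    (h0 : ∀ k ∈ s, 0 ≤ a k) (h1 : ∀ k ∈ s, a k ≤ 1) :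
    1 - ∑ k ∈ s, a k ≤ ∏ k ∈ s, (1 - a k) := by
  classical
  induction s using Finset.induction_on with
  | empty => simp
  | @insert j s hj ih =>
    rw [Finset.sum_insert hj, Finset.prod_insert hj]
    have h0' : ∀ k ∈ s, 0 ≤ a k := fun k hk => h0 k (Finset.mem_insert_of_mem hk)
    have h1' : ∀ k ∈ s, a k ≤ 1 := fun k hk => h1 k (Finset.mem_insert_of_mem hk)
    have hih := ih h0' h1'
    have hj0 : 0 ≤ a j := h0 j (Finset.mem_insert_self j s)
    have hj1 : a j ≤ 1 := h1 j (Finset.mem_insert_self j s)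
    have hs0 : 0 ≤ ∑ k ∈ s, a k := Finset.sum_nonneg h0'
    nlinarith [mul_le_mul_of_nonneg_left hih (by linarith : (0:ℝ) ≤ 1 - a j)]

lemma sum_pow_two' (m : ℕ) : ∑ k ∈ Finset.Icc 1 m, (2:ℝ)^k = 2^(m+1) - 2 := by
  induction m with
  | zero => simp
  | succ m ih =>
    rw [Finset.sum_Icc_succ_top (by omega : 1 ≤ m+1), ih]; ring

lemma sum_id' (n : ℕ) : ∑ i ∈ Finset.Icc 1 n, (i:ℝ) = n*(n+1)/2 := by
  induction n with
  | zero => simp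
  | succ m ih =>
    rw [Finset.sum_Icc_succ_top (by omega : 1 ≤ m+1), ih]; push_cast; ring

lemma key2 (n i : ℕ) : (2:ℝ)^((i:ℤ)-n-1) = 2^i / 2^(n+1) := by
  rw [show (i:ℤ)-n-1 = (i:ℤ) - ((n+1:ℕ):ℤ) by push_cast; ring,
    zpow_sub₀ (by norm_num : (2:ℝ) ≠ 0), zpow_natCast, zpow_natCast]

theorem stmt16 (n : ℕ) (hn : 1 ≤ n) (ε : ℝ) (hε : ε ∈ Set.Ioo (0:ℝ) 1)
    (c p1 p2 p3 : ℕ → ℝ)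
    (hc : ∀ i, c i = ((2:ℝ) ^ i - (i:ℝ)) / 2 ^ (n+1))
    (hp1 : ∀ i, p1 i = 1 - (2:ℝ) ^ ((i:ℤ) - n - 1))
    (hp2 : ∀ i, p2 i = c i)
    (hp3 : ∀ i, p3 i = (2:ℝ) ^ ((i:ℤ) - n - 1) - c i) :
    (∑ i ∈ Finset.Icc 1 n, (∏ k ∈ Finset.Icc 1 (i-1), p1 k) *
        (p2 i * (1 - 1) + p3 i * (1 - ε))
      ≥ (1 - ε) * ∑ i ∈ Finset.Icc 1 n,
          (1 - (2:ℝ) ^ ((i:ℤ) - n - 1)) * ((i:ℝ) / 2 ^ (n+1))) ∧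
    ((1 - ε) * ∑ i ∈ Finset.Icc 1 n,
          (1 - (2:ℝ) ^ ((i:ℤ) - n - 1)) * ((i:ℝ) / 2 ^ (n+1))
      ≥ (1 - ε) * (1 / 2 ^ (n+2)) * ∑ i ∈ Finset.Icc 1 n, (i:ℝ)) ∧
    ((1 - ε) * (1 / 2 ^ (n+2)) * ∑ i ∈ Finset.Icc 1 n, (i:ℝ)
      ≥ (1 - ε) * ((n:ℝ) / 8) * ((n:ℝ) / 2 ^ n)) := by
  obtain ⟨hε0, hε1⟩ := hε
  have h2 : (0:ℝ) < 2 ^ (n+1) := by positivity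
  have hεn : (0:ℝ) ≤ 1 - ε := by linarith
  refine ⟨?_, ?_, ?_⟩
  · -- part 1
    rw [ge_iff_le, Finset.mul_sum]
    apply Finset.sum_le_sum
    intro i hi
    obtain ⟨hi1, hin⟩ := Finset.mem_Icc.mp hi
    have hp3i : p3 i = (i:ℝ) / 2 ^ (n+1) := by
      rw [hp3, hc, key2]; field_simp; ring
    rw [hp2, hp3i]
    -- bound the product
    have hprod : 1 - (2:ℝ)^((i:ℤ)-n-1) ≤ ∏ k ∈ Finset.Icc 1 (i-1), p1 k := by
      have hpr : ∏ k ∈ Finset.Icc 1 (i-1), p1 k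
          = ∏ k ∈ Finset.Icc 1 (i-1), (1 - (2:ℝ)^((k:ℤ)-n-1)) :=
        Finset.prod_congr rfl (fun k _ => hp1 k)
      have hW := prod_one_sub_ge (Finset.Icc 1 (i-1)) (fun k => (2:ℝ)^((k:ℤ)-n-1))
        (fun k _ => by positivity)
        (fun k hk => by
          obtain ⟨hk1, hk2⟩ := Finset.mem_Icc.mp hk
          show (2:ℝ)^((k:ℤ)-n-1) ≤ 1
          rw [key2, div_le_one h2]
          exact pow_le_pow_right₀ (by norm_num) (by omega))
      have hsum : ∑ k ∈ Finset.Icc 1 (i-1), (2:ℝ)^((k:ℤ)-n-1)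
          ≤ (2:ℝ)^((i:ℤ)-n-1) := by
        have : ∑ k ∈ Finset.Icc 1 (i-1), (2:ℝ)^((k:ℤ)-n-1)
            = (∑ k ∈ Finset.Icc 1 (i-1), (2:ℝ)^k) / 2^(n+1) := by
          rw [Finset.sum_div]; exact Finset.sum_congr rfl (fun k _ => key2 n k)
        rw [this, sum_pow_two', key2, show i - 1 + 1 = i from by omega]
        gcongr
        linarith
      calc 1 - (2:ℝ)^((i:ℤ)-n-1) ≤ 1 - ∑ k ∈ Finset.Icc 1 (i-1), (2:ℝ)^((k:ℤ)-n-1) := by linarith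
        _ ≤ _ := by rw [hpr]; exact hW
    have hfac : (0:ℝ) ≤ (i:ℝ) / 2^(n+1) * (1-ε) := by positivity
    have hX1 : (2:ℝ)^((i:ℤ)-n-1) ≤ 1 := by
      rw [key2, div_le_one h2]
      exact pow_le_pow_right₀ (by norm_num) (by omega)
    nlinarith [mul_le_mul_of_nonneg_right hprod hfac]
  · -- part 2
    rw [ge_iff_le, mul_assoc]
    apply mul_le_mul_of_nonneg_left _ hεn
    rw [Finset.mul_sum]
    apply Finset.sum_le_sum
    intro i hi
    obtain ⟨hi1, hin⟩ := Finset.mem_Icc.mp hi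
    have hX : (2:ℝ)^((i:ℤ)-n-1) ≤ 1/2 := by
      rw [key2, div_le_div_iff₀ h2 (by norm_num)]
      calc (2:ℝ)^i * 2 = 2^(i+1) := by ring
        _ ≤ 2^(n+1) := pow_le_pow_right₀ (by norm_num) (by omega)
        _ = 1 * 2^(n+1) := by ring
    have hipos : (0:ℝ) ≤ (i:ℝ) := Nat.cast_nonneg i
    have h22 : (2:ℝ)^(n+2) = 2 * 2^(n+1) := by ring
    rw [h22]
    rw [div_mul_eq_mul_div, one_mul, div_le_iff₀ (by positivity)]
    have : (1 - (2:ℝ)^((i:ℤ)-n-1)) * ((i:ℝ) / 2^(n+1)) * (2 * 2^(n+1))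
        = (1 - (2:ℝ)^((i:ℤ)-n-1)) * (i:ℝ) * 2 := by field_simp
    rw [this]
    nlinarith
  · -- part 3
    rw [ge_iff_le, sum_id']
    have hp : (0:ℝ) < 2^n := by positivity
    have h2n2 : (2:ℝ)^(n+2) = 4 * 2^n := by ring
    rw [h2n2]
    have hnn : (0:ℝ) ≤ (n:ℝ) := Nat.cast_nonneg n
    have e1 : (1-ε) * ((n:ℝ)/8) * ((n:ℝ)/2^n) = (1-ε) * ((n:ℝ)*(n:ℝ)/(8*2^n)) := by ring
    have e2 : (1-ε) * (1/(4*2^n)) * ((n:ℝ)*((n:ℝ)+1)/2) = (1-ε) * ((n:ℝ)*((n:ℝ)+1)/(8*2^n)) := by ring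
    rw [e1, e2]
    apply mul_le_mul_of_nonneg_left _ hεn
    gcongr
    nlinarith
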